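/- For the 2×2 real matrices E = [[0,1],[0,0]], F = [[0,0],[1,0]], H = [[1,0],[0,−1]] and every z ∈ ℝ, the Baker–Campbell–Hausdorff product has the closed form exp(z·E)·exp(z·F) = exp(φ(z)·(E + F + (z/2)·H)), where φ(z) = 4·arcsinh(z/2)/√(4 + z²) and exp denotes the matrix exponential. -/

import Mathlib

open Matrix

lemma exp_of_sq_zero (A : Matrix (Fin 2) (Fin 2) ℝ) (h : A * A = 0) :
    NormedSpace.exp A = 1 + A := by
  rw [NormedSpace.exp_eq_tsum (𝕂 := ℝ)]
  show (∑' n : ℕ, (n.factorial : ℝ)⁻¹ • A ^ n) = 1 + A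
  have hz : ∀ n : ℕ, n ∉ ({0, 1} : Finset ℕ) →
      ((n.factorial : ℝ)⁻¹ • A ^ n : Matrix (Fin 2) (Fin 2) ℝ) = 0 := by
    intro n hn
    match n, hn with
    | (k+2), _ =>
      have h2 : A ^ (k + 2) = A ^ k * (A * A) := by rw [pow_add, pow_two]
      rw [h2, h, mul_zero, smul_zero]
  rw [tsum_eq_sum hz]
  simp [Finset.sum_pair (by norm_num : (0:ℕ) ≠ 1)]

theorem stmt_16 (z : ℝ)
    (E F H : Matrix (Fin 2) (Fin 2) ℝ)
    (hE : E = !![0, 1; 0, 0]) (hF : F = !![0, 0; 1, 0]) (hH : H = !![1, 0; 0, -1]) :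
    NormedSpace.exp (z • E) * NormedSpace.exp (z • F) =
      NormedSpace.exp
        ((4 * Real.arsinh (z / 2) / Real.sqrt (4 + z ^ 2)) • (E + F + (z / 2) • H)) := by
  subst hE hF hH
  set w : ℝ := Real.sqrt (4 + z ^ 2) with hw
  have hw2 : w ^ 2 = 4 + z ^ 2 := Real.sq_sqrt (by positivity)
  have hw0 : 0 < w := Real.sqrt_pos.2 (by positivity)
  set a : ℝ := Real.arsinh (z / 2) with ha
  set p : ℝ := (z + w) / 2 with hp
  set q : ℝ := (w - z) / 2 with hq
  have hpq : p * q = 1 := by rw [hp, hq]; nlinarith [hw2]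
  have hea : Real.exp a = p := by
    rw [← Real.cosh_add_sinh, ha, Real.sinh_arsinh, Real.cosh_arsinh]
    have h1 : (1 : ℝ) + (z / 2) ^ 2 = (w / 2) ^ 2 := by nlinarith [hw2]
    rw [h1, Real.sqrt_sq (by positivity)]
    rw [hp]; ring
  have he2a : Real.exp (2 * a) = p ^ 2 := by
    rw [two_mul, Real.exp_add, hea]; ring
  have hem2a : Real.exp (-(2 * a)) = q ^ 2 := by
    rw [Real.exp_neg, he2a]
    exact (eq_inv_of_mul_eq_one_left (by nlinarith [hpq])).symm
  -- LHS computation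
  have hE2 : (z • !![0, 1; 0, 0] : Matrix (Fin 2) (Fin 2) ℝ) * (z • !![0, 1; 0, 0]) = 0 := by
    ext i j; fin_cases i <;> fin_cases j <;>
      simp [Matrix.mul_apply, Fin.sum_univ_succ]
  have hF2 : (z • !![0, 0; 1, 0] : Matrix (Fin 2) (Fin 2) ℝ) * (z • !![0, 0; 1, 0]) = 0 := by
    ext i j; fin_cases i <;> fin_cases j <;>
      simp [Matrix.mul_apply, Fin.sum_univ_succ]
  rw [exp_of_sq_zero _ hE2, exp_of_sq_zero _ hF2]
  have hLHS : ((1 : Matrix (Fin 2) (Fin 2) ℝ) + z • !![0, 1; 0, 0]) * (1 + z • !![0, 0; 1, 0]) =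
      !![1 + z ^ 2, z; z, 1] := by
    ext i j; fin_cases i <;> fin_cases j <;>
      simp [Matrix.mul_apply, Fin.sum_univ_succ, Matrix.one_apply] <;> ring
  rw [hLHS]
  -- RHS computation
  set P : Matrix (Fin 2) (Fin 2) ℝ := !![1, 1; q, -p] with hP
  have hdet : P.det = -w := by
    rw [hP]
    simp [Matrix.det_fin_two_of, hp, hq]
    ring
  have hPunit : IsUnit P := by
    rw [Matrix.isUnit_iff_isUnit_det, hdet, isUnit_iff_ne_zero]
    exact neg_ne_zero.2 (ne_of_gt hw0)
  have hPP : P * P⁻¹ = 1 :=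
    Matrix.mul_nonsing_inv P (by rw [hdet]; exact isUnit_iff_ne_zero.2 (neg_ne_zero.2 (ne_of_gt hw0)))
  set D : Matrix (Fin 2) (Fin 2) ℝ := Matrix.diagonal ![2 * a, -(2 * a)] with hD
  -- the exponent equals P * D * P⁻¹
  have hX : ((4 * a / w) • (!![0, 1; 0, 0] + !![0, 0; 1, 0] + (z / 2) • !![1, 0; 0, -1])
        : Matrix (Fin 2) (Fin 2) ℝ) * P = P * D := by
    ext i j
    fin_cases i <;> fin_cases j
    all_goals simp [hP, hD, Matrix.mul_apply, Fin.sum_univ_succ, Matrix.diagonal]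
    all_goals try rw [hp, hq]
    all_goals try rw [hp]
    all_goals try rw [hq]
    all_goals try field_simp
    all_goals try ring
    all_goals linear_combination (-4*a) * hw2
  have hXeq : ((4 * a / w) • (!![0, 1; 0, 0] + !![0, 0; 1, 0] + (z / 2) • !![1, 0; 0, -1])
        : Matrix (Fin 2) (Fin 2) ℝ) = P * D * P⁻¹ := by
    calc _ = ((4 * a / w) • (!![0, 1; 0, 0] + !![0, 0; 1, 0] + (z / 2) • !![1, 0; 0, -1])
        : Matrix (Fin 2) (Fin 2) ℝ) * (P * P⁻¹) := by rw [hPP, mul_one]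
    _ = _ := by rw [← mul_assoc, hX]
  rw [hXeq, Matrix.exp_conj P D hPunit]
  have hexpD : NormedSpace.exp D = Matrix.diagonal ![p ^ 2, q ^ 2] := by
    rw [hD, Matrix.exp_diagonal]
    have hv : NormedSpace.exp (![2 * a, -(2 * a)] : Fin 2 → ℝ) = ![p ^ 2, q ^ 2] := by
      funext i
      fin_cases i <;>
        simp [Pi.exp_def, ← Real.exp_eq_exp_ℝ, he2a, hem2a]
    rw [hv]
  rw [hexpD]
  -- final: !![1+z^2, z; z, 1] = P * diagonal ![p^2,q^2] * P⁻¹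
  have hfin : (!![1 + z ^ 2, z; z, 1] : Matrix (Fin 2) (Fin 2) ℝ) * P =
      P * Matrix.diagonal ![p ^ 2, q ^ 2] := by
    ext i j
    fin_cases i <;> fin_cases j
    all_goals simp [hP, Matrix.mul_apply, Fin.sum_univ_succ, Matrix.diagonal]
    all_goals try rw [hp, hq]
    all_goals try rw [hp]
    all_goals try rw [hq]
    all_goals try ring
    all_goals try linear_combination (-(1/4 : ℝ)) * hw2
    all_goals try linear_combination (-((z+w)/8)) * hw2
    all_goals linear_combination ((w-z)/8) * hw2
  calc (!![1 + z ^ 2, z; z, 1] : Matrix (Fin 2) (Fin 2) ℝ)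
      = !![1 + z ^ 2, z; z, 1] * (P * P⁻¹) := by rw [hPP, mul_one]
    _ = (!![1 + z ^ 2, z; z, 1] * P) * P⁻¹ := by rw [mul_assoc]
    _ = (P * Matrix.diagonal ![p ^ 2, q ^ 2]) * P⁻¹ := by rw [hfin]
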